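/- With G and G' as in the gadget construction (one n-source gadget per vertex of G, shared sources for edges of G), the graph G has a Hamiltonian path if and only if there exists a pebbling strategy in the (2,1)-I/O model with partial computations that eliminates all edges of G' with total cost at most n² + n + 1, where n = |V(G)|. -/

import Mathlib

/-! The Red-Blue Pebble Game with partial computations, in the `(M,1)`-I/O model.
A pebble on a vertex means the corresponding word is in the cache; a blue pebble is a
"dirty" partial result that must be stored (cost 1) before it can leave the cache. -/

inductive Pebble : Type
  | red
  | blue
deriving DecidableEq

/-- A configuration: the remaining (not yet computed) edges of the DAG, and the pebble
(if any) on each vertex. -/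
structure Config (V : Type) where
  edges : Finset (V × V)
  peb : V → Option Pebble

variable {V : Type} [DecidableEq V] [Fintype V]

/-- The number of pebbles currently on the graph. -/
def pebCount (c : Config V) : ℕ :=
  (Finset.univ.filter fun v => (c.peb v).isSome).card

/-- One move of the game with at most `M` pebbles, together with its cost:
(R1) place a red pebble on an empty vertex, cost 1 (LOAD);
(R2) remove a red pebble, cost 0 (REMOVE), or change red to blue, cost 0;
(R3) change a blue pebble to red, cost 1 (STORE);
(R4) if `u` is a leaf and both `u` and `v` are pebbled, delete the edge `(u,v)` for free,
     and the pebble on `v` becomes blue (partial COMPUTE);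
(R5) at most `M` pebbles are on the graph at any time. -/
inductive Step (M : ℕ) : Config V → Config V → ℕ → Prop
  | load (c : Config V) (v : V) (h : c.peb v = none) (hM : pebCount c < M) :
      Step M c ⟨c.edges, Function.update c.peb v (some Pebble.red)⟩ 1
  | remove (c : Config V) (v : V) (h : c.peb v = some Pebble.red) :
      Step M c ⟨c.edges, Function.update c.peb v none⟩ 0
  | toBlue (c : Config V) (v : V) (h : c.peb v = some Pebble.red) :
      Step M c ⟨c.edges, Function.update c.peb v (some Pebble.blue)⟩ 0
  | store (c : Config V) (v : V) (h : c.peb v = some Pebble.blue) :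
      Step M c ⟨c.edges, Function.update c.peb v (some Pebble.red)⟩ 1
  | compute (c : Config V) (u v : V) (he : (u, v) ∈ c.edges)
      (hleaf : ∀ x, (x, u) ∉ c.edges)
      (hu : (c.peb u).isSome) (hv : (c.peb v).isSome) :
      Step M c ⟨c.edges.erase (u, v), Function.update c.peb v (some Pebble.blue)⟩ 0

/-- `Reach M c c' k`: configuration `c'` is reachable from `c` by a pebbling strategy of
total cost `k`. -/
inductive Reach (M : ℕ) : Config V → Config V → ℕ → Prop
  | refl (c : Config V) : Reach M c c 0
  | tail {a b c : Config V} {k1 k2 : ℕ} :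
      Reach M a b k1 → Step M b c k2 → Reach M a c (k1 + k2)

/-- The set of costs of pebbling strategies that, starting from the DAG with edge set `E`
and an empty cache, delete all edges and store all results (no dirty blue pebble
remains). -/
def Achievable (M : ℕ) (E : Finset (V × V)) : Set ℕ :=
  {k | ∃ c' : Config V, Reach M ⟨E, fun _ => none⟩ c' k ∧
    c'.edges = ∅ ∧ ∀ v, c'.peb v ≠ some Pebble.blue}

/-- The source vertex `s_{ij}` of gadget `g_i`, as an index: when `v_i` and `v_j` are
adjacent in `G`, the sources `s_{ij}` and `s_{ji}` are merged into the single canonical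
(sorted) pair; otherwise `s_{ij}` is the private source `(i, j)`. -/
def src {n : ℕ} (G : SimpleGraph (Fin n)) [DecidableRel G.Adj] (i j : Fin n) :
    Fin n × Fin n :=
  if G.Adj i j ∧ j < i then (j, i) else (i, j)

/-- The edge set of the bipartite DAG `G'` built from `G`: vertices are the targets `t_i`
(`Sum.inl i`) and the sources (`Sum.inr` of an index pair); for every `i` and `j` there is
an edge from the source `s_{ij}` to the target `t_i`. -/
def gadgetEdges {n : ℕ} (G : SimpleGraph (Fin n)) [DecidableRel G.Adj] :
    Finset ((Fin n ⊕ Fin n × Fin n) × (Fin n ⊕ Fin n × Fin n)) :=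
  Finset.univ.image fun p : Fin n × Fin n => (Sum.inr (src G p.1 p.2), Sum.inl p.1)
section Helpers
set_option linter.unusedSectionVars false

variable {V : Type} [DecidableEq V] [Fintype V]

lemma Reach.cast {M : ℕ} {a b : Config V} {k k' : ℕ} (h : Reach M a b k) (hk : k = k') :
    Reach M a b k' := hk ▸ h

lemma Reach.trans {M : ℕ} {a b c : Config V} {k1 k2 : ℕ}
    (h1 : Reach M a b k1) (h2 : Reach M b c k2) : Reach M a c (k1 + k2) := by
  induction h2 with
  | refl => exact h1.cast (by omega)
  | @tail x y k1' k2' r s ih => exact (Reach.tail ih s).cast (by omega)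

lemma Step.toReach {M : ℕ} {a b : Config V} {k : ℕ} (h : Step M a b k) : Reach M a b k :=
  (Reach.tail (Reach.refl a) h).cast (by omega)

lemma pebCount_congr {E E' : Finset (V × V)} {f g : V → Option Pebble} (h : ∀ v, (f v).isSome = (g v).isSome) :
    pebCount ⟨E, f⟩ = pebCount ⟨E', g⟩ := by
  unfold pebCount
  congr 1
  exact Finset.filter_congr (fun x _ => by simp [h x])

lemma pebCount_update_isSome {E E' : Finset (V × V)} {f : V → Option Pebble} {v : V}
    (hv : (f v).isSome) (p : Pebble) :
    pebCount ⟨E, Function.update f v (some p)⟩ = pebCount ⟨E', f⟩ := by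
  refine pebCount_congr (fun w => ?_)
  by_cases hw : w = v <;> simp [Function.update_apply, hw, hv]

lemma pebCount_update_some_of_none {E E' : Finset (V × V)} {f : V → Option Pebble} {v : V}
    (hv : f v = none) (p : Pebble) :
    pebCount ⟨E, Function.update f v (some p)⟩ = pebCount ⟨E', f⟩ + 1 := by
  unfold pebCount
  have : (Finset.univ.filter fun w => ((Function.update f v (some p)) w).isSome)
      = insert v (Finset.univ.filter fun w => (f w).isSome) := by
    ext w
    by_cases hw : w = v <;> simp [Function.update_apply, hw, hv]
  rw [this, Finset.card_insert_of_notMem (by simp [hv])]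

lemma pebCount_update_none_le {E E' : Finset (V × V)} {f : V → Option Pebble} {v : V} :
    pebCount ⟨E, Function.update f v none⟩ ≤ pebCount ⟨E', f⟩ := by
  unfold pebCount
  refine Finset.card_le_card (fun w hw => ?_)
  simp only [Finset.mem_filter, Finset.mem_univ, true_and] at hw ⊢
  by_cases hwv : w = v <;> simp_all [Function.update_apply, hwv]

end Helpers

section Gadget

variable {n : ℕ} (G : SimpleGraph (Fin n)) [DecidableRel G.Adj]

/-- The edge of gadget `i` coming from source `s_{ij}`. -/
def ge (i j : Fin n) : (Fin n ⊕ Fin n × Fin n) × (Fin n ⊕ Fin n × Fin n) :=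
  (Sum.inr (src G i j), Sum.inl i)

lemma ge_mem (i j : Fin n) : ge G i j ∈ gadgetEdges G :=
  Finset.mem_image.2 ⟨(i, j), Finset.mem_univ _, rfl⟩

lemma mem_gadgetEdges {ed : (Fin n ⊕ Fin n × Fin n) × (Fin n ⊕ Fin n × Fin n)} :
    ed ∈ gadgetEdges G ↔ ∃ i j, ed = ge G i j := by
  constructor
  · intro h
    rcases Finset.mem_image.1 h with ⟨p, _, hp⟩
    exact ⟨p.1, p.2, hp.symm⟩
  · rintro ⟨i, j, rfl⟩; exact ge_mem G i j

lemma snd_eq_inl_of_mem {ed : (Fin n ⊕ Fin n × Fin n) × (Fin n ⊕ Fin n × Fin n)}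
    (h : ed ∈ gadgetEdges G) : ∃ i, ed.2 = Sum.inl i := by
  rcases (mem_gadgetEdges G).1 h with ⟨i, j, rfl⟩
  exact ⟨i, rfl⟩

lemma not_mem_of_snd_inr {E : Finset ((Fin n ⊕ Fin n × Fin n) × (Fin n ⊕ Fin n × Fin n))}
    (hE : E ⊆ gadgetEdges G) (x : Fin n ⊕ Fin n × Fin n) (p : Fin n × Fin n) :
    (x, Sum.inr p) ∉ E := by
  intro h
  rcases snd_eq_inl_of_mem G (hE h) with ⟨i, hi⟩
  simp at hi

lemma src_inj {i j j' : Fin n} (h : src G i j = src G i j') : j = j' := by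
  unfold src at h
  split_ifs at h with h1 h2 h2 <;> simp only [Prod.mk.injEq] at h
  · exact h.1
  · exact absurd h1.2 (by rw [h.1]; exact lt_irrefl i)
  · exact absurd h2.2 (by rw [← h.1]; exact lt_irrefl i)
  · exact h.2

lemma src_comm {i j : Fin n} (h : G.Adj i j) : src G i j = src G j i := by
  unfold src
  have hne : i ≠ j := G.ne_of_adj h
  rcases lt_or_gt_of_ne hne with hlt | hlt
  · rw [if_neg (fun hc => absurd hc.2 (not_lt.2 hlt.le)), if_pos ⟨h.symm, hlt⟩]
  · rw [if_pos ⟨h, hlt⟩, if_neg (fun hc => absurd hc.2 (not_lt.2 hlt.le))]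

lemma ge_inj {i j j' : Fin n} (h : ge G i j = ge G i j') : j = j' :=
  src_inj G (by simpa [ge, Prod.ext_iff] using h)

lemma adj_of_src_eq {i i' j j' : Fin n} (hne : i ≠ i') (h : src G i j = src G i' j') :
    G.Adj i i' := by
  unfold src at h
  split_ifs at h with h1 h2 h2 <;> simp only [Prod.mk.injEq] at h
  · exact absurd h.2 hne
  · exact h.1 ▸ h1.1
  · rw [h.1]; exact h2.1.symm
  · exact absurd h.1 hne

end Gadget
section Forward

variable {n : ℕ} (G : SimpleGraph (Fin n)) [DecidableRel G.Adj]

/-- A pebble function with a single pebble. -/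
def singlePeb (v : Fin n ⊕ Fin n × Fin n) (p : Pebble) : (Fin n ⊕ Fin n × Fin n) → Option Pebble :=
  fun x => if x = v then some p else none

lemma pebCount_single (E : Finset _) (v : Fin n ⊕ Fin n × Fin n) (p : Pebble) :
    pebCount ⟨E, singlePeb v p⟩ = 1 := by
  unfold pebCount
  have : (Finset.univ.filter fun w => ((singlePeb v p) w).isSome) = {v} := by
    ext w
    by_cases hw : w = v <;> simp [singlePeb, hw]
  rw [this, Finset.card_singleton]

lemma pebCount_none (E : Finset ((Fin n ⊕ Fin n × Fin n) × (Fin n ⊕ Fin n × Fin n))) :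
    pebCount ⟨E, fun _ => none⟩ = 0 := by
  unfold pebCount
  simp

/-- Load a source, compute its edge into `t_i`, remove the source: cost 1. -/
lemma step_source (c : Config (Fin n ⊕ Fin n × Fin n)) (i j : Fin n)
    (hsub : c.edges ⊆ gadgetEdges G)
    (he : ge G i j ∈ c.edges)
    (ht : (c.peb (Sum.inl i)).isSome)
    (hs : c.peb (Sum.inr (src G i j)) = none)
    (hpc : pebCount c = 1) :
    Reach 2 c ⟨c.edges.erase (ge G i j),
      Function.update c.peb (Sum.inl i) (some Pebble.blue)⟩ 1 := by
  have r1 : Step 2 c ⟨c.edges, Function.update c.peb (Sum.inr (src G i j)) (some Pebble.red)⟩ 1 :=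
    Step.load c _ hs (by omega)
  set c1 : Config (Fin n ⊕ Fin n × Fin n) :=
    ⟨c.edges, Function.update c.peb (Sum.inr (src G i j)) (some Pebble.red)⟩ with hc1
  have r2 : Step 2 c1 ⟨c1.edges.erase (Sum.inr (src G i j), Sum.inl i),
      Function.update c1.peb (Sum.inl i) (some Pebble.blue)⟩ 0 :=
    Step.compute c1 (Sum.inr (src G i j)) (Sum.inl i)
      (by show ge G i j ∈ c.edges; exact he)
      (fun x => not_mem_of_snd_inr G hsub x _)
      (by simp [hc1])
      (by simp [hc1, Function.update_apply, ht])
  set c2 : Config (Fin n ⊕ Fin n × Fin n) :=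
    ⟨c1.edges.erase (Sum.inr (src G i j), Sum.inl i),
      Function.update c1.peb (Sum.inl i) (some Pebble.blue)⟩ with hc2
  have r3 : Step 2 c2 ⟨c2.edges, Function.update c2.peb (Sum.inr (src G i j)) none⟩ 0 :=
    Step.remove c2 _ (by simp [hc2, hc1, Function.update_apply])
  have hfin : (⟨c2.edges, Function.update c2.peb (Sum.inr (src G i j)) none⟩ : Config _)
      = ⟨c.edges.erase (ge G i j), Function.update c.peb (Sum.inl i) (some Pebble.blue)⟩ := by
    simp only [hc2, hc1]
    congr 1
    funext x
    rcases x with a | a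
    · by_cases hx : a = i <;> simp [Function.update_apply, hx]
    · by_cases hx : a = src G i j <;> simp [Function.update_apply, hx, hs]
  exact hfin ▸ ((r1.toReach.trans r2.toReach).trans r3.toReach).cast (by omega)

/-- Process a list of sources of gadget `i`: cost `J.length`. -/
lemma reach_sources (i : Fin n) : ∀ (J : List (Fin n)) (c : Config (Fin n ⊕ Fin n × Fin n)),
    J ≠ [] → J.Nodup →
    c.edges ⊆ gadgetEdges G →
    (∀ j ∈ J, ge G i j ∈ c.edges) →
    (c.peb (Sum.inl i)).isSome →
    (∀ j ∈ J, c.peb (Sum.inr (src G i j)) = none) →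
    pebCount c = 1 →
    Reach 2 c ⟨c.edges \ (J.map (ge G i)).toFinset,
      Function.update c.peb (Sum.inl i) (some Pebble.blue)⟩ J.length
  | [], _, hne, _, _, _, _, _, _ => absurd rfl hne
  | [j], c, _, _, hsub, hedg, ht, hsrc, hpc => by
      have h := step_source G c i j hsub (hedg j (by simp)) ht (hsrc j (by simp)) hpc
      have hE : c.edges.erase (ge G i j) = c.edges \ ([j].map (ge G i)).toFinset := by
        simp [Finset.sdiff_singleton_eq_erase]
      rw [hE] at h
      exact h
  | (j :: j' :: J'), c, _, hnd, hsub, hedg, ht, hsrc, hpc => by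
      have r1 := step_source G c i j hsub (hedg j (by simp)) ht (hsrc j (by simp)) hpc
      set c1 : Config (Fin n ⊕ Fin n × Fin n) :=
        ⟨c.edges.erase (ge G i j), Function.update c.peb (Sum.inl i) (some Pebble.blue)⟩ with hc1
      have hnd' : (j' :: J').Nodup := hnd.of_cons
      have hjne : ∀ m ∈ j' :: J', m ≠ j := by
        intro m hm
        rintro rfl
        exact (List.nodup_cons.1 hnd).1 hm
      have r2 := reach_sources i (j' :: J') c1 (by simp) hnd'
        (fun ed hed => hsub (Finset.mem_of_mem_erase hed))
        (fun m hm => Finset.mem_erase.2 ⟨fun hc => (hjne m hm) (ge_inj G hc), hedg m (by simp [hm])⟩)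
        (by simp [hc1])
        (fun m hm => by
          simp only [hc1, Function.update_apply, if_neg (by simp : (Sum.inr (src G i m) : Fin n ⊕ Fin n × Fin n) ≠ Sum.inl i)]
          exact hsrc m (by simp [hm]))
        (by
          show pebCount ⟨c.edges.erase (ge G i j), Function.update c.peb (Sum.inl i) (some Pebble.blue)⟩ = 1
          exact (pebCount_update_isSome (E' := c.edges) ht Pebble.blue).trans hpc)
      have hedges : c1.edges \ ((j' :: J').map (ge G i)).toFinset
          = c.edges \ ((j :: j' :: J').map (ge G i)).toFinset := by
        simp only [hc1, List.map_cons, List.toFinset_cons]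
        ext ed
        simp only [Finset.mem_sdiff, Finset.mem_erase, Finset.mem_insert]
        tauto
      have hpeb : Function.update c1.peb (Sum.inl i) (some Pebble.blue)
          = Function.update c.peb (Sum.inl i) (some Pebble.blue) := by
        simp [hc1, Function.update_idem]
      have := r1.trans r2
      rw [hedges, hpeb] at this
      exact this.cast (by simp only [List.length_cons]; omega)

end Forward
section Forward2

variable {n : ℕ} (G : SimpleGraph (Fin n)) [DecidableRel G.Adj]

lemma entry_lemma (i p : Fin n) (E : Finset ((Fin n ⊕ Fin n × Fin n) × (Fin n ⊕ Fin n × Fin n)))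
    (hE : E ⊆ gadgetEdges G) (hep : ge G i p ∈ E) :
    Reach 2 ⟨E, singlePeb (Sum.inr (src G i p)) Pebble.red⟩
      ⟨E.erase (ge G i p), singlePeb (Sum.inl i) Pebble.blue⟩ 1 := by
  set f0 := singlePeb (n := n) (Sum.inr (src G i p)) Pebble.red with hf0
  have r1 : Step 2 (⟨E, f0⟩ : Config _) ⟨E, Function.update f0 (Sum.inl i) (some Pebble.red)⟩ 1 :=
    Step.load _ (Sum.inl i) (by simp [hf0, singlePeb]) (by rw [pebCount_single]; omega)
  set c1 : Config (Fin n ⊕ Fin n × Fin n) := ⟨E, Function.update f0 (Sum.inl i) (some Pebble.red)⟩ with hc1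
  have r2 : Step 2 c1 ⟨c1.edges.erase (Sum.inr (src G i p), Sum.inl i),
      Function.update c1.peb (Sum.inl i) (some Pebble.blue)⟩ 0 :=
    Step.compute c1 _ _ (by exact hep) (fun x => not_mem_of_snd_inr G hE x _)
      (by simp [hc1, Function.update_apply, hf0, singlePeb])
      (by simp [hc1])
  set c2 : Config (Fin n ⊕ Fin n × Fin n) := ⟨c1.edges.erase (Sum.inr (src G i p), Sum.inl i),
      Function.update c1.peb (Sum.inl i) (some Pebble.blue)⟩ with hc2
  have r3 : Step 2 c2 ⟨c2.edges, Function.update c2.peb (Sum.inr (src G i p)) none⟩ 0 :=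
    Step.remove c2 _ (by simp [hc2, hc1, Function.update_apply, hf0, singlePeb])
  have hfin : (⟨c2.edges, Function.update c2.peb (Sum.inr (src G i p)) none⟩ : Config _)
      = ⟨E.erase (ge G i p), singlePeb (Sum.inl i) Pebble.blue⟩ := by
    simp only [hc2, hc1]
    congr 1
    funext x
    rcases x with a | a
    · by_cases hx : a = i <;> simp [Function.update_apply, hx, singlePeb, hf0]
    · by_cases hx : a = src G i p <;> simp [Function.update_apply, hx, singlePeb, hf0]
  exact hfin ▸ ((r1.toReach.trans r2.toReach).trans r3.toReach).cast (by omega)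

lemma exit_lemma (i q : Fin n) (E : Finset ((Fin n ⊕ Fin n × Fin n) × (Fin n ⊕ Fin n × Fin n)))
    (hE : E ⊆ gadgetEdges G) (heq : ge G i q ∈ E) :
    Reach 2 ⟨E, singlePeb (Sum.inl i) Pebble.blue⟩
      ⟨E.erase (ge G i q), singlePeb (Sum.inr (src G i q)) Pebble.red⟩ 2 := by
  set f0 := singlePeb (n := n) (Sum.inl i) Pebble.blue with hf0
  have r1 : Step 2 (⟨E, f0⟩ : Config _) ⟨E, Function.update f0 (Sum.inr (src G i q)) (some Pebble.red)⟩ 1 :=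
    Step.load _ _ (by simp [hf0, singlePeb]) (by rw [pebCount_single]; omega)
  set c1 : Config (Fin n ⊕ Fin n × Fin n) := ⟨E, Function.update f0 (Sum.inr (src G i q)) (some Pebble.red)⟩ with hc1
  have r2 : Step 2 c1 ⟨c1.edges.erase (Sum.inr (src G i q), Sum.inl i),
      Function.update c1.peb (Sum.inl i) (some Pebble.blue)⟩ 0 :=
    Step.compute c1 _ _ (by exact heq) (fun x => not_mem_of_snd_inr G hE x _)
      (by simp [hc1])
      (by simp [hc1, Function.update_apply, hf0, singlePeb])
  set c2 : Config (Fin n ⊕ Fin n × Fin n) := ⟨c1.edges.erase (Sum.inr (src G i q), Sum.inl i),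
      Function.update c1.peb (Sum.inl i) (some Pebble.blue)⟩ with hc2
  have r3 : Step 2 c2 ⟨c2.edges, Function.update c2.peb (Sum.inl i) (some Pebble.red)⟩ 1 :=
    Step.store c2 _ (by simp [hc2])
  set c3 : Config (Fin n ⊕ Fin n × Fin n) := ⟨c2.edges, Function.update c2.peb (Sum.inl i) (some Pebble.red)⟩ with hc3
  have r4 : Step 2 c3 ⟨c3.edges, Function.update c3.peb (Sum.inl i) none⟩ 0 :=
    Step.remove c3 _ (by simp [hc3])
  have hfin : (⟨c3.edges, Function.update c3.peb (Sum.inl i) none⟩ : Config _)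
      = ⟨E.erase (ge G i q), singlePeb (Sum.inr (src G i q)) Pebble.red⟩ := by
    simp only [hc3, hc2, hc1]
    congr 1
    funext x
    rcases x with a | a
    · by_cases hx : a = i <;> simp [Function.update_apply, hx, singlePeb, hf0]
    · by_cases hx : a = src G i q <;> simp [Function.update_apply, hx, singlePeb, hf0]
  exact hfin ▸ (((r1.toReach.trans r2.toReach).trans r3.toReach).trans r4.toReach).cast (by omega)

/-- All edges of gadget `i`. -/
def gadgetSet (i : Fin n) : Finset ((Fin n ⊕ Fin n × Fin n) × (Fin n ⊕ Fin n × Fin n)) :=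
  Finset.univ.image (ge G i)

/-- Remaining edges after the first `k` gadgets (in the order given by `σ`). -/
def Rk (σ : Equiv.Perm (Fin n)) (k : ℕ) : Finset ((Fin n ⊕ Fin n × Fin n) × (Fin n ⊕ Fin n × Fin n)) :=
  (gadgetEdges G).filter (fun ed => ∃ m : Fin n, k ≤ (m : ℕ) ∧ ed.2 = Sum.inl (σ m))

lemma Rk_zero (σ : Equiv.Perm (Fin n)) : Rk G σ 0 = gadgetEdges G := by
  apply Finset.filter_true_of_mem
  intro ed hed
  rcases snd_eq_inl_of_mem G hed with ⟨i, hi⟩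
  exact ⟨σ.symm i, Nat.zero_le _, by rw [hi, Equiv.apply_symm_apply]⟩

lemma Rk_last (σ : Equiv.Perm (Fin n)) (k : ℕ) (hk : n ≤ k) : Rk G σ k = ∅ := by
  apply Finset.filter_false_of_mem
  rintro ed - ⟨m, hm, -⟩
  have := m.isLt
  omega

lemma ge_mem_Rk (σ : Equiv.Perm (Fin n)) (k : ℕ) (hk : k < n) (j : Fin n) :
    ge G (σ ⟨k, hk⟩) j ∈ Rk G σ k :=
  Finset.mem_filter.2 ⟨ge_mem G _ _, ⟨⟨k, hk⟩, le_refl _, rfl⟩⟩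

lemma Rk_subset (σ : Equiv.Perm (Fin n)) (k : ℕ) : Rk G σ k ⊆ gadgetEdges G :=
  Finset.filter_subset _ _

lemma Rk_succ (σ : Equiv.Perm (Fin n)) (k : ℕ) (hk : k < n) :
    Rk G σ k \ gadgetSet G (σ ⟨k, hk⟩) = Rk G σ (k + 1) := by
  ext ed
  simp only [Finset.mem_sdiff, Rk, Finset.mem_filter, gadgetSet, Finset.mem_image]
  constructor
  · rintro ⟨⟨hed, m, hm, h2⟩, hni⟩
    refine ⟨hed, m, ?_, h2⟩
    rcases Nat.lt_or_ge (m : ℕ) (k + 1) with h | h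
    · exfalso
      have hm2 : m = ⟨k, hk⟩ := Fin.ext (by simp only [Fin.val_mk]; omega)
      rcases (mem_gadgetEdges G).1 hed with ⟨i', j', rfl⟩
      have hii : i' = σ ⟨k, hk⟩ := by
        rw [hm2] at h2
        simpa [ge] using h2
      exact hni ⟨j', Finset.mem_univ _, by rw [← hii]⟩
    · exact h
  · rintro ⟨hed, m, hm, h2⟩
    refine ⟨⟨hed, m, by omega, h2⟩, ?_⟩
    rintro ⟨j, -, rfl⟩
    have hσ : σ ⟨k, hk⟩ = σ m := by simpa [ge] using h2
    have hkm : (⟨k, hk⟩ : Fin n) = m := σ.injective hσ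
    have hv : ((⟨k, hk⟩ : Fin n) : ℕ) = (m : ℕ) := congrArg Fin.val hkm
    simp only [Fin.val_mk] at hv
    omega

lemma card_filter_ne (q : Fin n) :
    (Finset.univ.filter (fun j : Fin n => j ≠ q)).card + 1 = n := by
  rw [Finset.filter_ne', Finset.card_erase_of_mem (Finset.mem_univ _), Finset.card_univ,
    Fintype.card_fin]
  have := q.pos
  omega

lemma card_filter_ne2 (p q : Fin n) (hpq : p ≠ q) :
    (Finset.univ.filter (fun j : Fin n => j ≠ p ∧ j ≠ q)).card + 2 = n := by
  have h1 : (Finset.univ.filter (fun j : Fin n => j ≠ p ∧ j ≠ q)) = Finset.univ \ {p, q} := by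
    ext j; simp [not_or]
  have h2 : ({p, q} : Finset (Fin n)).card = 2 := Finset.card_pair hpq
  rw [h1, Finset.card_sdiff_of_subset (Finset.subset_univ _), h2, Finset.card_univ, Fintype.card_fin]
  have : ({p, q} : Finset (Fin n)).card ≤ n := by
    simpa [Finset.card_univ] using Finset.card_le_card (Finset.subset_univ ({p, q} : Finset (Fin n)))
  omega

end Forward2
section Forward3

variable {n : ℕ} (G : SimpleGraph (Fin n)) [DecidableRel G.Adj]

lemma update_single_blue (i : Fin n) :
    Function.update (singlePeb (n := n) (Sum.inl i) Pebble.blue) (Sum.inl i) (some Pebble.blue)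
      = singlePeb (Sum.inl i) Pebble.blue := by
  funext x
  by_cases hx : x = Sum.inl i <;> simp [Function.update_apply, hx, singlePeb]

lemma update_single_red_blue (i : Fin n) :
    Function.update (singlePeb (n := n) (Sum.inl i) Pebble.red) (Sum.inl i) (some Pebble.blue)
      = singlePeb (Sum.inl i) Pebble.blue := by
  funext x
  by_cases hx : x = Sum.inl i <;> simp [Function.update_apply, hx, singlePeb]

/-- Process sources `J` of gadget `i` starting from a single (red or blue) pebble on `t_i`. -/
lemma mid_sources (i : Fin n) (pb : Pebble)
    (J : List (Fin n)) (hJne : J ≠ []) (hJnd : J.Nodup)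
    (E : Finset ((Fin n ⊕ Fin n × Fin n) × (Fin n ⊕ Fin n × Fin n)))
    (hE : E ⊆ gadgetEdges G) (hedg : ∀ j ∈ J, ge G i j ∈ E) :
    Reach 2 ⟨E, singlePeb (Sum.inl i) pb⟩
      ⟨E \ (J.map (ge G i)).toFinset, singlePeb (Sum.inl i) Pebble.blue⟩ J.length := by
  have r := reach_sources G i J ⟨E, singlePeb (Sum.inl i) pb⟩ hJne hJnd hE hedg
    (by simp [singlePeb]) (fun m _ => by simp [singlePeb]) (pebCount_single _ _ _)
  have hupd : Function.update (singlePeb (n := n) (Sum.inl i) pb) (Sum.inl i) (some Pebble.blue)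
      = singlePeb (Sum.inl i) Pebble.blue := by
    funext x
    by_cases hx : x = Sum.inl i <;> simp [Function.update_apply, hx, singlePeb]
  simpa [hupd] using r

/-- Edge set bookkeeping: removing `{p}ᶜ`-sources and then `geq` clears gadget `i`. -/
lemma edges_after (i : Fin n) (E : Finset ((Fin n ⊕ Fin n × Fin n) × (Fin n ⊕ Fin n × Fin n)))
    (P : Fin n → Prop) [DecidablePred P]
    (hcov : ∀ j : Fin n, ¬ P j → ge G i j ∉ E) :
    E \ (((Finset.univ.filter P).toList).map (ge G i)).toFinset = E \ gadgetSet G i := by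
  ext ed
  simp only [Finset.mem_sdiff, List.mem_toFinset, List.mem_map, Finset.mem_toList,
    Finset.mem_filter, Finset.mem_univ, true_and, gadgetSet, Finset.mem_image]
  constructor
  · rintro ⟨hed, hn⟩
    refine ⟨hed, ?_⟩
    rintro ⟨j, rfl⟩
    by_cases hP : P j
    · exact hn ⟨j, hP, rfl⟩
    · exact hcov j hP hed
  · rintro ⟨hed, hn⟩
    refine ⟨hed, ?_⟩
    rintro ⟨j, -, hje⟩
    exact hn ⟨j, hje⟩

lemma G_alone (i : Fin n)
    (E : Finset ((Fin n ⊕ Fin n × Fin n) × (Fin n ⊕ Fin n × Fin n)))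
    (hE : E ⊆ gadgetEdges G) (hgad : ∀ j, ge G i j ∈ E) :
    Reach 2 ⟨E, fun _ => none⟩ ⟨E \ gadgetSet G i, singlePeb (Sum.inl i) Pebble.red⟩ (n + 2) := by
  -- load target
  have r1 : Step 2 (⟨E, fun _ => none⟩ : Config (Fin n ⊕ Fin n × Fin n))
      ⟨E, Function.update (fun _ => none) (Sum.inl i) (some Pebble.red)⟩ 1 :=
    Step.load _ _ rfl (by rw [pebCount_none]; omega)
  have hpeb1 : Function.update (fun _ => (none : Option Pebble)) (Sum.inl i) (some Pebble.red)
      = singlePeb (n := n) (Sum.inl i) Pebble.red := by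
    funext x
    by_cases hx : x = Sum.inl i <;> simp [Function.update_apply, hx, singlePeb]
  rw [hpeb1] at r1
  -- all sources
  set J := (Finset.univ.filter (fun _ : Fin n => True)).toList with hJ
  have hJne : J ≠ [] := by
    rw [hJ, Ne, Finset.toList_eq_nil]
    intro h
    have : i ∈ Finset.univ.filter (fun _ : Fin n => True) := by simp
    rw [h] at this
    simp at this
  have r2 := mid_sources G i Pebble.red J hJne (Finset.nodup_toList _) E hE
    (fun j _ => hgad j)
  have hJlen : J.length = n := by
    rw [hJ, Finset.length_toList]
    simp
  have hedges := edges_after G i E (fun _ => True) (fun j hj => absurd trivial hj)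
  rw [hedges] at r2
  -- store
  have r3 : Step 2 (⟨E \ gadgetSet G i, singlePeb (Sum.inl i) Pebble.blue⟩ : Config _)
      ⟨E \ gadgetSet G i, Function.update (singlePeb (Sum.inl i) Pebble.blue) (Sum.inl i) (some Pebble.red)⟩ 1 :=
    Step.store _ _ (by simp [singlePeb])
  have hpeb3 : Function.update (singlePeb (n := n) (Sum.inl i) Pebble.blue) (Sum.inl i) (some Pebble.red)
      = singlePeb (Sum.inl i) Pebble.red := by
    funext x
    by_cases hx : x = Sum.inl i <;> simp [Function.update_apply, hx, singlePeb]
  rw [hpeb3] at r3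
  exact ((r1.toReach.trans r2).trans r3.toReach).cast (by omega)

lemma G_first (i q : Fin n) (hiq : G.Adj i q)
    (E : Finset ((Fin n ⊕ Fin n × Fin n) × (Fin n ⊕ Fin n × Fin n)))
    (hE : E ⊆ gadgetEdges G) (hgad : ∀ j, ge G i j ∈ E) :
    Reach 2 ⟨E, fun _ => none⟩
      ⟨E \ gadgetSet G i, singlePeb (Sum.inr (src G i q)) Pebble.red⟩ (n + 2) := by
  have hiq' : i ≠ q := hiq.ne
  have r1 : Step 2 (⟨E, fun _ => none⟩ : Config (Fin n ⊕ Fin n × Fin n))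
      ⟨E, Function.update (fun _ => none) (Sum.inl i) (some Pebble.red)⟩ 1 :=
    Step.load _ _ rfl (by rw [pebCount_none]; omega)
  have hpeb1 : Function.update (fun _ => (none : Option Pebble)) (Sum.inl i) (some Pebble.red)
      = singlePeb (n := n) (Sum.inl i) Pebble.red := by
    funext x
    by_cases hx : x = Sum.inl i <;> simp [Function.update_apply, hx, singlePeb]
  rw [hpeb1] at r1
  set J := (Finset.univ.filter (fun j : Fin n => j ≠ q)).toList with hJ
  have hJne : J ≠ [] := by
    rw [hJ, Ne, Finset.toList_eq_nil]
    intro h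
    have : i ∈ Finset.univ.filter (fun j : Fin n => j ≠ q) := by simp [hiq']
    rw [h] at this
    simp at this
  have r2 := mid_sources G i Pebble.red J hJne (Finset.nodup_toList _) E hE
    (fun j _ => hgad j)
  have hJlen : J.length + 1 = n := by
    rw [hJ, Finset.length_toList]
    exact card_filter_ne q
  -- exit through the shared source s_{iq}
  have hmem : ge G i q ∈ E \ (J.map (ge G i)).toFinset := by
    refine Finset.mem_sdiff.2 ⟨hgad q, ?_⟩
    simp only [List.mem_toFinset, List.mem_map, hJ, Finset.mem_toList, Finset.mem_filter,
      Finset.mem_univ, true_and]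
    rintro ⟨j, hjq, hje⟩
    exact hjq (ge_inj G hje)
  have r3 := exit_lemma G i q (E \ (J.map (ge G i)).toFinset)
    (fun ed hed => hE (Finset.mem_sdiff.1 hed).1) hmem
  have hedges : (E \ (J.map (ge G i)).toFinset).erase (ge G i q) = E \ gadgetSet G i := by
    have h1 : (E \ (J.map (ge G i)).toFinset).erase (ge G i q)
        = (E.erase (ge G i q)) \ (J.map (ge G i)).toFinset := by
      ext ed
      simp only [Finset.mem_erase, Finset.mem_sdiff]
      tauto
    rw [h1, hJ]
    have := edges_after G i (E.erase (ge G i q)) (fun j : Fin n => j ≠ q)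
      (fun j hj => by
        simp only [ne_eq, not_not] at hj
        subst hj
        exact Finset.notMem_erase _ _)
    rw [this]
    ext ed
    simp only [Finset.mem_sdiff, Finset.mem_erase, gadgetSet, Finset.mem_image]
    constructor
    · rintro ⟨⟨-, hed⟩, hn⟩
      exact ⟨hed, hn⟩
    · rintro ⟨hed, hn⟩
      exact ⟨⟨fun hc => hn ⟨q, Finset.mem_univ _, hc.symm⟩, hed⟩, hn⟩
  rw [hedges] at r3
  exact ((r1.toReach.trans r2).trans r3).cast (by omega)

lemma G_middle (i p q : Fin n) (hpi : G.Adj p i) (hiq : G.Adj i q) (hpq : p ≠ q)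
    (E : Finset ((Fin n ⊕ Fin n × Fin n) × (Fin n ⊕ Fin n × Fin n)))
    (hE : E ⊆ gadgetEdges G) (hgad : ∀ j, ge G i j ∈ E) :
    Reach 2 ⟨E, singlePeb (Sum.inr (src G i p)) Pebble.red⟩
      ⟨E \ gadgetSet G i, singlePeb (Sum.inr (src G i q)) Pebble.red⟩ (n + 1) := by
  have hip' : i ≠ p := hpi.symm.ne
  have hiq' : i ≠ q := hiq.ne
  have r1 := entry_lemma G i p E hE (hgad p)
  set J := (Finset.univ.filter (fun j : Fin n => j ≠ p ∧ j ≠ q)).toList with hJ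
  have hJne : J ≠ [] := by
    rw [hJ, Ne, Finset.toList_eq_nil]
    intro h
    have : i ∈ Finset.univ.filter (fun j : Fin n => j ≠ p ∧ j ≠ q) := by simp [hip', hiq']
    rw [h] at this
    simp at this
  have r2 := mid_sources G i Pebble.blue J hJne (Finset.nodup_toList _) (E.erase (ge G i p))
    (fun ed hed => hE (Finset.mem_of_mem_erase hed))
    (fun j hj => by
      refine Finset.mem_erase.2 ⟨fun hc => ?_, hgad j⟩
      rw [hJ, Finset.mem_toList, Finset.mem_filter] at hj
      exact hj.2.1 (ge_inj G hc))
  have hJlen : J.length + 2 = n := by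
    rw [hJ, Finset.length_toList]
    exact card_filter_ne2 p q hpq
  have hmem : ge G i q ∈ (E.erase (ge G i p)) \ (J.map (ge G i)).toFinset := by
    refine Finset.mem_sdiff.2 ⟨Finset.mem_erase.2 ⟨fun hc => hpq (ge_inj G hc).symm, hgad q⟩, ?_⟩
    simp only [List.mem_toFinset, List.mem_map, hJ, Finset.mem_toList, Finset.mem_filter,
      Finset.mem_univ, true_and]
    rintro ⟨j, hjpq, hje⟩
    exact hjpq.2 (ge_inj G hje)
  have r3 := exit_lemma G i q ((E.erase (ge G i p)) \ (J.map (ge G i)).toFinset)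
    (fun ed hed => hE (Finset.mem_of_mem_erase (Finset.mem_sdiff.1 hed).1)) hmem
  have hedges : ((E.erase (ge G i p)) \ (J.map (ge G i)).toFinset).erase (ge G i q)
      = E \ gadgetSet G i := by
    ext ed
    simp only [Finset.mem_erase, Finset.mem_sdiff, List.mem_toFinset, List.mem_map, hJ,
      Finset.mem_toList, Finset.mem_filter, Finset.mem_univ, true_and, gadgetSet,
      Finset.mem_image]
    constructor
    · rintro ⟨hnq, ⟨⟨hnp, hed⟩, hnJ⟩⟩
      refine ⟨hed, ?_⟩
      rintro ⟨j, rfl⟩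
      by_cases hjp : j = p
      · exact hnp (by rw [hjp])
      by_cases hjq : j = q
      · exact hnq (by rw [hjq])
      exact hnJ ⟨j, ⟨hjp, hjq⟩, rfl⟩
    · rintro ⟨hed, hni⟩
      refine ⟨fun hc => hni ⟨q, hc.symm⟩,
        ⟨fun hc => hni ⟨p, hc.symm⟩, hed⟩, ?_⟩
      rintro ⟨j, -, hje⟩
      exact hni ⟨j, hje⟩
  rw [hedges] at r3
  exact ((r1.trans r2).trans r3).cast (by omega)

lemma G_last (i p : Fin n) (hpi : G.Adj p i)
    (E : Finset ((Fin n ⊕ Fin n × Fin n) × (Fin n ⊕ Fin n × Fin n)))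
    (hE : E ⊆ gadgetEdges G) (hgad : ∀ j, ge G i j ∈ E) :
    Reach 2 ⟨E, singlePeb (Sum.inr (src G i p)) Pebble.red⟩
      ⟨E \ gadgetSet G i, singlePeb (Sum.inl i) Pebble.red⟩ (n + 1) := by
  have hip' : i ≠ p := hpi.symm.ne
  have r1 := entry_lemma G i p E hE (hgad p)
  set J := (Finset.univ.filter (fun j : Fin n => j ≠ p)).toList with hJ
  have hJne : J ≠ [] := by
    rw [hJ, Ne, Finset.toList_eq_nil]
    intro h
    have : i ∈ Finset.univ.filter (fun j : Fin n => j ≠ p) := by simp [hip']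
    rw [h] at this
    simp at this
  have r2 := mid_sources G i Pebble.blue J hJne (Finset.nodup_toList _) (E.erase (ge G i p))
    (fun ed hed => hE (Finset.mem_of_mem_erase hed))
    (fun j hj => by
      refine Finset.mem_erase.2 ⟨fun hc => ?_, hgad j⟩
      rw [hJ, Finset.mem_toList, Finset.mem_filter] at hj
      exact hj.2 (ge_inj G hc))
  have hJlen : J.length + 1 = n := by
    rw [hJ, Finset.length_toList]
    exact card_filter_ne p
  have hedges : (E.erase (ge G i p)) \ (J.map (ge G i)).toFinset = E \ gadgetSet G i := by
    rw [hJ]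
    have := edges_after G i (E.erase (ge G i p)) (fun j : Fin n => j ≠ p)
      (fun j hj => by
        simp only [ne_eq, not_not] at hj
        subst hj
        exact Finset.notMem_erase _ _)
    rw [this]
    ext ed
    simp only [Finset.mem_sdiff, Finset.mem_erase, gadgetSet, Finset.mem_image]
    constructor
    · rintro ⟨⟨-, hed⟩, hn⟩
      exact ⟨hed, hn⟩
    · rintro ⟨hed, hn⟩
      exact ⟨⟨fun hc => hn ⟨p, Finset.mem_univ _, hc.symm⟩, hed⟩, hn⟩
  rw [hedges] at r2
  have r3 : Step 2 (⟨E \ gadgetSet G i, singlePeb (Sum.inl i) Pebble.blue⟩ : Config _)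
      ⟨E \ gadgetSet G i, Function.update (singlePeb (Sum.inl i) Pebble.blue) (Sum.inl i) (some Pebble.red)⟩ 1 :=
    Step.store _ _ (by simp [singlePeb])
  have hpeb3 : Function.update (singlePeb (n := n) (Sum.inl i) Pebble.blue) (Sum.inl i) (some Pebble.red)
      = singlePeb (Sum.inl i) Pebble.red := by
    funext x
    by_cases hx : x = Sum.inl i <;> simp [Function.update_apply, hx, singlePeb]
  rw [hpeb3] at r3
  exact ((r1.trans r2).trans r3.toReach).cast (by omega)

end Forward3
section Forward4

variable {n : ℕ} (G : SimpleGraph (Fin n)) [DecidableRel G.Adj]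

lemma single_no_blue (v : Fin n ⊕ Fin n × Fin n) :
    ∀ w, singlePeb (n := n) v Pebble.red w ≠ some Pebble.blue := by
  intro w
  unfold singlePeb
  split <;> simp

lemma chain (σ : Equiv.Perm (Fin n))
    (hσ : ∀ (m : ℕ) (h : m + 1 < n), G.Adj (σ ⟨m, Nat.lt_of_succ_lt h⟩) (σ ⟨m + 1, h⟩)) :
    ∀ (d k : ℕ), k + d + 1 = n → 1 ≤ k → ∀ (hkn : k < n) (hk0 : k - 1 < n),
    ∃ c', Reach 2 ⟨Rk G σ k, singlePeb (Sum.inr (src G (σ ⟨k, hkn⟩) (σ ⟨k - 1, hk0⟩))) Pebble.red⟩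
        c' ((d + 1) * (n + 1)) ∧ c'.edges = ∅ ∧ ∀ v, c'.peb v ≠ some Pebble.blue := by
  intro d
  induction d with
  | zero =>
    intro k hkd hk1 hkn hk0
    have hpi : G.Adj (σ ⟨k - 1, hk0⟩) (σ ⟨k, hkn⟩) := by
      have h := hσ (k - 1) (by omega)
      have e : (⟨k - 1 + 1, by omega⟩ : Fin n) = ⟨k, hkn⟩ := Fin.ext (by simp only [Fin.val_mk]; omega)
      rwa [e] at h
    have r := G_last G (σ ⟨k, hkn⟩) (σ ⟨k - 1, hk0⟩) hpi (Rk G σ k) (Rk_subset G σ k)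
      (ge_mem_Rk G σ k hkn)
    rw [Rk_succ G σ k hkn, Rk_last G σ (k + 1) (by omega)] at r
    exact ⟨_, r.cast (by omega), rfl, single_no_blue _⟩
  | succ d ih =>
    intro k hkd hk1 hkn hk0
    have hk1n : k + 1 < n := by omega
    have hpi : G.Adj (σ ⟨k - 1, hk0⟩) (σ ⟨k, hkn⟩) := by
      have h := hσ (k - 1) (by omega)
      have e : (⟨k - 1 + 1, by omega⟩ : Fin n) = ⟨k, hkn⟩ := Fin.ext (by simp only [Fin.val_mk]; omega)
      rwa [e] at h
    have hiq : G.Adj (σ ⟨k, hkn⟩) (σ ⟨k + 1, hk1n⟩) := hσ k hk1n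
    have hpq : σ ⟨k - 1, hk0⟩ ≠ σ ⟨k + 1, hk1n⟩ := by
      intro hc
      have h2 := congrArg Fin.val (σ.injective hc)
      simp only [Fin.val_mk] at h2
      omega
    have r1 := G_middle G (σ ⟨k, hkn⟩) (σ ⟨k - 1, hk0⟩) (σ ⟨k + 1, hk1n⟩) hpi hiq hpq
      (Rk G σ k) (Rk_subset G σ k) (ge_mem_Rk G σ k hkn)
    rw [Rk_succ G σ k hkn, src_comm G hiq] at r1
    obtain ⟨c', r2, he, hb⟩ := ih (k + 1) (by omega) (by omega) hk1n (by omega)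
    have e1 : (⟨k + 1 - 1, by omega⟩ : Fin n) = ⟨k, hkn⟩ := Fin.ext (by simp only [Fin.val_mk]; omega)
    rw [e1] at r2
    exact ⟨c', (r1.trans r2).cast (by ring), he, hb⟩

lemma forward_dir (hn : 1 ≤ n) (σ : Equiv.Perm (Fin n))
    (hσ : ∀ (m : ℕ) (h : m + 1 < n), G.Adj (σ ⟨m, Nat.lt_of_succ_lt h⟩) (σ ⟨m + 1, h⟩)) :
    ∃ k ∈ Achievable 2 (gadgetEdges G), k ≤ n ^ 2 + n + 1 := by
  rcases Nat.lt_or_ge n 2 with h2 | h2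
  · have h0 : (0:ℕ) < n := by omega
    have r := G_alone G ⟨0, h0⟩ (gadgetEdges G) Finset.Subset.rfl (ge_mem G _)
    have hempty : gadgetEdges G \ gadgetSet G ⟨0, h0⟩ = ∅ := by
      apply Finset.eq_empty_of_forall_notMem
      intro ed hed
      obtain ⟨hmem, hni⟩ := Finset.mem_sdiff.1 hed
      rcases (mem_gadgetEdges G).1 hmem with ⟨i', j', rfl⟩
      have hi' : i' = ⟨0, h0⟩ := Fin.ext (by have := i'.isLt; simp only [Fin.val_mk]; omega)
      exact hni (Finset.mem_image.2 ⟨j', Finset.mem_univ _, by rw [← hi']⟩)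
    rw [hempty] at r
    refine ⟨n + 2, ⟨⟨∅, singlePeb (Sum.inl ⟨0, h0⟩) Pebble.red⟩, r, rfl, single_no_blue _⟩, ?_⟩
    nlinarith
  · have h0 : (0:ℕ) < n := by omega
    have h1 : (1:ℕ) < n := by omega
    have hiq : G.Adj (σ ⟨0, h0⟩) (σ ⟨1, h1⟩) := hσ 0 h1
    have r1 := G_first G (σ ⟨0, h0⟩) (σ ⟨1, h1⟩) hiq (gadgetEdges G) Finset.Subset.rfl (ge_mem G _)
    have hR1 : gadgetEdges G \ gadgetSet G (σ ⟨0, h0⟩) = Rk G σ 1 := by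
      conv_lhs => rw [← Rk_zero G σ]
      exact Rk_succ G σ 0 h0
    rw [hR1, src_comm G hiq] at r1
    obtain ⟨c', r2, he, hb⟩ := chain G σ hσ (n - 2) 1 (by omega) le_rfl h1 (by omega)
    have e1 : (⟨1 - 1, by omega⟩ : Fin n) = ⟨0, h0⟩ := Fin.ext (by simp only [Fin.val_mk])
    rw [e1] at r2
    have r := r1.trans r2
    refine ⟨_, ⟨c', r, he, hb⟩, ?_⟩
    obtain ⟨m, rfl⟩ : ∃ m, n = m + 2 := ⟨n - 2, by omega⟩
    simp only [Nat.add_sub_cancel]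
    exact Nat.le_of_eq (by ring)

end Forward4
section Lists

variable {α : Type*} [DecidableEq α]

/-- Number of adjacent equal pairs. -/
def dups : List α → ℕ
  | a :: b :: l => (if a = b then 1 else 0) + dups (b :: l)
  | _ => 0

/-- Collapse consecutive duplicates. -/
def cds : List α → List α
  | [] => []
  | [a] => [a]
  | a :: b :: l => if a = b then cds (b :: l) else a :: cds (b :: l)

lemma dups_concat : ∀ (l : List α) (a : α),
    dups (l ++ [a]) = dups l +
      (match l.getLast? with | none => 0 | some b => if b = a then 1 else 0)
  | [], a => by simp [dups]
  | [b], a => by simp [dups, List.getLast?]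
  | b :: c :: t, a => by
      have ih := dups_concat (c :: t) a
      simp only [List.cons_append, dups, List.append_eq] at ih ⊢
      rw [List.getLast?_cons_cons, ih]
      exact (Nat.add_assoc _ _ _).symm

lemma dups_eq_zero_of_nodup : ∀ {l : List α}, l.Nodup → dups l = 0
  | [], _ => rfl
  | [a], _ => rfl
  | a :: b :: l, h => by
      have h1 : a ≠ b := by
        intro hc
        exact (List.nodup_cons.1 h).1 (by simp [hc])
      have h2 := dups_eq_zero_of_nodup (List.Nodup.of_cons h)
      simp [dups, h1, h2]

lemma cds_head : ∀ (l : List α) (b : α), ∃ t, cds (b :: l) = b :: t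
  | [], b => ⟨[], rfl⟩
  | c :: t, b => by
      by_cases h : b = c
      · obtain ⟨t', ht⟩ := cds_head t c
        exact ⟨t', by rw [show cds (b :: c :: t) = cds (c :: t) by simp [cds, h], ht, h]⟩
      · exact ⟨cds (c :: t), by simp [cds, h]⟩

lemma length_cds : ∀ l : List α, (cds l).length + dups l = l.length
  | [] => rfl
  | [a] => rfl
  | a :: b :: l => by
      have ih := length_cds (b :: l)
      by_cases h : a = b <;> simp only [cds, dups, h, if_true, if_false, List.length_cons] <;>
        simp at ih ⊢ <;> omega

lemma toFinset_cds : ∀ l : List α, (cds l).toFinset = l.toFinset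
  | [] => rfl
  | [a] => rfl
  | a :: b :: l => by
      have ih := toFinset_cds (b :: l)
      by_cases h : a = b
      · subst h
        rw [show cds (a :: a :: l) = cds (a :: l) by simp [cds]]
        rw [ih]
        simp
      · rw [show cds (a :: b :: l) = a :: cds (b :: l) by simp [cds, h]]
        simp only [List.toFinset_cons, ih]

lemma chain'_cds (R : α → α → Prop) :
    ∀ l : List α, l.Chain' (fun x y => x = y ∨ R x y) → (cds l).Chain' R
  | [], _ => List.isChain_nil
  | [a], _ => List.isChain_singleton a
  | a :: b :: l, h => by
      obtain ⟨hab, h'⟩ := List.isChain_cons_cons.1 h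
      by_cases heq : a = b
      · rw [show cds (a :: b :: l) = cds (b :: l) by simp [cds, heq]]
        exact chain'_cds R (b :: l) h'
      · rcases hab with hab | hR
        · exact absurd hab heq
        · rw [show cds (a :: b :: l) = a :: cds (b :: l) by simp [cds, heq]]
          obtain ⟨t', ht⟩ := cds_head l b
          rw [ht]
          exact List.isChain_cons_cons.2 ⟨hR, ht ▸ chain'_cds R (b :: l) h'⟩

lemma nodup_of_card_toFinset : ∀ l : List α, l.toFinset.card = l.length → l.Nodup
  | [], _ => List.nodup_nil
  | a :: l, h => by
      rw [List.toFinset_cons] at h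
      have hle := List.toFinset_card_le l
      by_cases hmem : a ∈ l.toFinset
      · rw [Finset.insert_eq_self.2 hmem] at h
        simp only [List.length_cons] at h
        omega
      · rw [Finset.card_insert_of_notMem hmem] at h
        simp only [List.length_cons] at h
        have := nodup_of_card_toFinset l (by omega)
        exact List.nodup_cons.2 ⟨by simpa using hmem, this⟩

lemma dups_fst_snd {β γ : Type*} [DecidableEq β] [DecidableEq γ] :
    ∀ (x : β × γ) (t : List (β × γ)),
      dups ((x :: t).map Prod.fst) + dups ((x :: t).map Prod.snd) ≤ t.length + dups (x :: t)
  | x, [] => by simp [dups]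
  | x, y :: t => by
      have ih := dups_fst_snd y t
      simp only [List.map_cons, List.length_cons] at ih ⊢
      rw [show dups (x.1 :: y.1 :: t.map Prod.fst) =
          (if x.1 = y.1 then 1 else 0) + dups (y.1 :: t.map Prod.fst) from rfl,
        show dups (x.2 :: y.2 :: t.map Prod.snd) =
          (if x.2 = y.2 then 1 else 0) + dups (y.2 :: t.map Prod.snd) from rfl,
        show dups (x :: y :: t) = (if x = y then 1 else 0) + dups (y :: t) from rfl]
      by_cases hxy : x = y
      · subst hxy
        simp only [if_true, if_pos rfl]
        omega
      · rw [if_neg hxy]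
        by_cases h1 : x.1 = y.1
        · by_cases h2 : x.2 = y.2
          · exact absurd (Prod.ext h1 h2) hxy
          · simp only [h1, h2, if_true, if_false, if_pos rfl]
            omega
        · simp only [h1, if_false]
          by_cases h2 : x.2 = y.2 <;> simp only [h2, if_true, if_false] <;> omega

lemma chain_of_dups {β γ : Type*} [DecidableEq β] [DecidableEq γ] :
    ∀ (l : List (β × γ)), l.Nodup →
      l.length ≤ dups (l.map Prod.fst) + dups (l.map Prod.snd) + 1 →
      l.Chain' (fun a b => a.1 = b.1 ∨ a.2 = b.2)
  | [], _, _ => List.isChain_nil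
  | [x], _, _ => List.isChain_singleton x
  | x :: y :: t, hnd, hlen => by
      have hxy : x ≠ y := by
        intro hc
        exact (List.nodup_cons.1 hnd).1 (by simp [hc])
      have hnd' : (y :: t).Nodup := List.Nodup.of_cons hnd
      have hz : dups (y :: t) = 0 := dups_eq_zero_of_nodup hnd'
      have hrest := dups_fst_snd y t
      rw [hz] at hrest
      simp only [List.map_cons, List.length_cons] at hlen hrest ⊢
      rw [show dups (x.1 :: y.1 :: t.map Prod.fst) =
          (if x.1 = y.1 then 1 else 0) + dups (y.1 :: t.map Prod.fst) from rfl,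
        show dups (x.2 :: y.2 :: t.map Prod.snd) =
          (if x.2 = y.2 then 1 else 0) + dups (y.2 :: t.map Prod.snd) from rfl] at hlen
      have hnotboth : ¬(x.1 = y.1 ∧ x.2 = y.2) := fun hc => hxy (Prod.ext hc.1 hc.2)
      refine List.isChain_cons_cons.2 ⟨?_, ?_⟩
      · by_cases h1 : x.1 = y.1
        · exact Or.inl h1
        · refine Or.inr ?_
          by_contra h2
          simp only [h1, h2, if_false] at hlen
          omega
      · refine chain_of_dups (y :: t) hnd' ?_
        simp only [List.map_cons, List.length_cons]
        by_cases h1 : x.1 = y.1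
        · have h2 : ¬ x.2 = y.2 := fun hc => hnotboth ⟨h1, hc⟩
          simp only [h1, h2, if_true, if_false] at hlen
          omega
        · by_cases h2 : x.2 = y.2 <;> simp only [h1, h2, if_true, if_false] at hlen <;> omega

end Lists
section Lower

variable {n : ℕ} (G : SimpleGraph (Fin n)) [DecidableRel G.Adj]

def embE (p : (Fin n × Fin n) × Fin n) : (Fin n ⊕ Fin n × Fin n) × (Fin n ⊕ Fin n × Fin n) :=
  (Sum.inr p.1, Sum.inl p.2)

def deltaT (cs : List ((Fin n × Fin n) × Fin n)) (f : (Fin n ⊕ Fin n × Fin n) → Option Pebble) : ℕ :=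
  match cs.getLast? with
  | none => 0
  | some st => if f (Sum.inl st.2) = some Pebble.blue then 1 else 0

def allowed (cs : List ((Fin n × Fin n) × Fin n)) : Finset (Fin n ⊕ Fin n × Fin n) :=
  match cs.getLast? with
  | none => ∅
  | some st => {Sum.inr st.1, Sum.inl st.2}

def extra (cs : List ((Fin n × Fin n) × Fin n)) (f : (Fin n ⊕ Fin n × Fin n) → Option Pebble) : ℕ :=
  ((Finset.univ.filter fun v => (f v).isSome) \ allowed cs).card

lemma deltaT_none (cs : List ((Fin n × Fin n) × Fin n)) (f) (hcs : cs.getLast? = none) :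
    deltaT cs f = 0 := by
  unfold deltaT
  rw [hcs]

lemma deltaT_some (cs : List ((Fin n × Fin n) × Fin n)) (f) (st) (hcs : cs.getLast? = some st) :
    deltaT cs f = if f (Sum.inl st.2) = some Pebble.blue then 1 else 0 := by
  unfold deltaT
  rw [hcs]

lemma allowed_none (cs : List ((Fin n × Fin n) × Fin n)) (hcs : cs.getLast? = none) :
    allowed cs = ∅ := by
  unfold allowed
  rw [hcs]

lemma allowed_some (cs : List ((Fin n × Fin n) × Fin n)) (st) (hcs : cs.getLast? = some st) :
    allowed cs = {Sum.inr st.1, Sum.inl st.2} := by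
  unfold allowed
  rw [hcs]

/-- The invariant maintained by every play of the game on the gadget graph. -/
def GInv (c : Config (Fin n ⊕ Fin n × Fin n)) (k : ℕ) : Prop :=
  pebCount c ≤ 2 ∧ ∃ cs : List ((Fin n × Fin n) × Fin n),
    (cs.map (embE (n := n))).Nodup ∧
    (∀ e ∈ cs.map (embE (n := n)), e ∈ gadgetEdges G) ∧
    c.edges = gadgetEdges G \ (cs.map (embE (n := n))).toFinset ∧
    3 * cs.length + extra cs c.peb ≤
      k + deltaT cs c.peb + dups (cs.map Prod.fst) + 2 * dups (cs.map Prod.snd)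

lemma filter_update_some (f : (Fin n ⊕ Fin n × Fin n) → Option Pebble) (v) (p : Pebble) :
    (Finset.univ.filter fun w => ((Function.update f v (some p)) w).isSome)
      = insert v (Finset.univ.filter fun w => (f w).isSome) := by
  ext w
  by_cases hw : w = v <;> simp [Function.update_apply, hw]

lemma filter_update_none (f : (Fin n ⊕ Fin n × Fin n) → Option Pebble) (v) :
    (Finset.univ.filter fun w => ((Function.update f v none) w).isSome)
      = (Finset.univ.filter fun w => (f w).isSome).erase v := by
  ext w
  by_cases hw : w = v <;> simp [Function.update_apply, hw]

lemma deltaT_update_other (cs : List ((Fin n × Fin n) × Fin n)) (f) (v) (o : Option Pebble)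
    (hv : o ≠ some Pebble.blue ∨ f v = some Pebble.blue) :
    deltaT cs (Function.update f v o) ≤ deltaT cs f := by
  cases hcs : cs.getLast? with
  | none => rw [deltaT_none _ _ hcs, deltaT_none _ _ hcs]
  | some st =>
    rw [deltaT_some _ _ _ hcs, deltaT_some _ _ _ hcs]
    by_cases hw : (Sum.inl st.2 : Fin n ⊕ Fin n × Fin n) = v
    · rw [hw, Function.update_self]
      rcases hv with hv | hv
      · simp only [if_neg hv]
        omega
      · rw [if_pos hv]
        split <;> omega
    · rw [Function.update_of_ne hw]

lemma dups_concat_last {α : Type*} [DecidableEq α] {l : List α} {b : α}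
    (hl : l.getLast? = some b) (a : α) :
    dups (l ++ [a]) = dups l + (if b = a then 1 else 0) := by
  rw [dups_concat, hl]

lemma pebCount_eta (c : Config (Fin n ⊕ Fin n × Fin n)) (E : Finset _) :
    pebCount ⟨E, c.peb⟩ = pebCount c := rfl

lemma inv_of_reach {c' : Config (Fin n ⊕ Fin n × Fin n)} {k : ℕ}
    (h : Reach 2 ⟨gadgetEdges G, fun _ => none⟩ c' k) : GInv G c' k := by
  induction h with
  | refl =>
    refine ⟨by rw [pebCount_none]; omega, [], by simp, by simp, by simp, ?_⟩
    simp [extra, dups, deltaT]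
  | @tail c c2 k1 k2 r s ih =>
    obtain ⟨hpc, cs, hnd, hmem, hedg, har⟩ := ih
    cases s with
    | load v h hM =>
      refine ⟨?_, cs, hnd, hmem, hedg, ?_⟩
      · rw [pebCount_update_some_of_none (E' := c.edges) h, pebCount_eta]
        omega
      · dsimp only
        have hext : extra cs (Function.update c.peb v (some Pebble.red)) ≤ extra cs c.peb + 1 := by
          unfold extra
          rw [filter_update_some]
          calc ((insert v (Finset.univ.filter fun w => (c.peb w).isSome)) \ allowed cs).card
              ≤ (insert v ((Finset.univ.filter fun w => (c.peb w).isSome) \ allowed cs)).card :=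
                Finset.card_le_card (by
                  intro w hw
                  simp only [Finset.mem_sdiff, Finset.mem_insert] at hw ⊢
                  tauto)
            _ ≤ _ + 1 := Finset.card_insert_le _ _
        have hdel : deltaT cs c.peb ≤ deltaT cs (Function.update c.peb v (some Pebble.red)) := by
          cases hcs : cs.getLast? with
          | none => rw [deltaT_none _ _ hcs, deltaT_none _ _ hcs]
          | some st =>
            rw [deltaT_some _ _ _ hcs, deltaT_some _ _ _ hcs]
            by_cases hw : (Sum.inl st.2 : Fin n ⊕ Fin n × Fin n) = v
            · rw [hw, Function.update_self, h]
              simp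
            · rw [Function.update_of_ne hw]
        omega
    | remove v h =>
      refine ⟨?_, cs, hnd, hmem, hedg, ?_⟩
      · calc pebCount ⟨c.edges, Function.update c.peb v none⟩
            ≤ pebCount ⟨c.edges, c.peb⟩ := pebCount_update_none_le
          _ = pebCount c := rfl
          _ ≤ 2 := hpc
      · dsimp only
        have hext : extra cs (Function.update c.peb v none) ≤ extra cs c.peb := by
          unfold extra
          rw [filter_update_none]
          exact Finset.card_le_card (fun w hw => by
            simp only [Finset.mem_sdiff, Finset.mem_erase] at hw ⊢
            exact ⟨hw.1.2, hw.2⟩)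
        have hdel2 : deltaT cs c.peb ≤ deltaT cs (Function.update c.peb v none) := by
          cases hcs : cs.getLast? with
          | none => rw [deltaT_none _ _ hcs, deltaT_none _ _ hcs]
          | some st =>
            rw [deltaT_some _ _ _ hcs, deltaT_some _ _ _ hcs]
            by_cases hw : (Sum.inl st.2 : Fin n ⊕ Fin n × Fin n) = v
            · rw [hw, Function.update_self, h]
              simp
            · rw [Function.update_of_ne hw]
        omega
    | toBlue v h =>
      refine ⟨?_, cs, hnd, hmem, hedg, ?_⟩
      · rw [pebCount_update_isSome (E' := c.edges) (by rw [h]; rfl), pebCount_eta]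
        exact hpc
      · dsimp only
        have hfil : (Finset.univ.filter fun w => ((Function.update c.peb v (some Pebble.blue)) w).isSome)
            = (Finset.univ.filter fun w => (c.peb w).isSome) := by
          rw [filter_update_some]
          exact Finset.insert_eq_self.2 (by simp [h])
        have hext : extra cs (Function.update c.peb v (some Pebble.blue)) = extra cs c.peb := by
          unfold extra
          rw [hfil]
        have hdel : deltaT cs c.peb ≤ deltaT cs (Function.update c.peb v (some Pebble.blue)) := by
          cases hcs : cs.getLast? with
          | none => rw [deltaT_none _ _ hcs, deltaT_none _ _ hcs]
          | some st =>
            rw [deltaT_some _ _ _ hcs, deltaT_some _ _ _ hcs]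
            by_cases hw : (Sum.inl st.2 : Fin n ⊕ Fin n × Fin n) = v
            · rw [hw, Function.update_self, h]
              simp
            · rw [Function.update_of_ne hw]
        omega
    | store v h =>
      refine ⟨?_, cs, hnd, hmem, hedg, ?_⟩
      · rw [pebCount_update_isSome (E' := c.edges) (by rw [h]; rfl), pebCount_eta]
        exact hpc
      · dsimp only
        have hfil : (Finset.univ.filter fun w => ((Function.update c.peb v (some Pebble.red)) w).isSome)
            = (Finset.univ.filter fun w => (c.peb w).isSome) := by
          rw [filter_update_some]
          exact Finset.insert_eq_self.2 (by simp [h])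
        have hext : extra cs (Function.update c.peb v (some Pebble.red)) = extra cs c.peb := by
          unfold extra
          rw [hfil]
        have hdel : deltaT cs c.peb ≤ deltaT cs (Function.update c.peb v (some Pebble.red)) + 1 := by
          cases hcs : cs.getLast? with
          | none => rw [deltaT_none _ _ hcs]; omega
          | some st =>
            rw [deltaT_some _ _ _ hcs]
            split <;> omega
        omega
    | compute u v he hleaf hu hv =>
      have hmemE : (u, v) ∈ gadgetEdges G := by
        rw [hedg] at he
        exact (Finset.mem_sdiff.1 he).1
      have hnotin : (u, v) ∉ cs.map (embE (n := n)) := by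
        rw [hedg] at he
        intro hc
        exact (Finset.mem_sdiff.1 he).2 (List.mem_toFinset.2 hc)
      rcases (mem_gadgetEdges G).1 hmemE with ⟨i, j, huv⟩
      obtain ⟨hu_eq, hv_eq⟩ := Prod.mk.injEq _ _ _ _ ▸ huv
      have hne_uv : u ≠ v := by rw [hu_eq, hv_eq]; simp
      have hembE : embE (src G i j, i) = (u, v) := by rw [hu_eq, hv_eq]; rfl
      have hF : (Finset.univ.filter fun w => (c.peb w).isSome) = {u, v} := by
        refine (Finset.eq_of_subset_of_card_le ?_ ?_).symm
        · intro w hw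
          rcases Finset.mem_insert.1 hw with rfl | hw
          · simp [hu]
          · rw [Finset.mem_singleton.1 hw]
            simp [hv]
        · calc (Finset.univ.filter fun w => (c.peb w).isSome).card = pebCount c := rfl
            _ ≤ 2 := hpc
            _ = ({u, v} : Finset _).card := by
                  rw [Finset.card_insert_of_notMem (by simp [hne_uv]), Finset.card_singleton]
      refine ⟨?_, cs ++ [(src G i j, i)], ?_, ?_, ?_, ?_⟩
      · rw [pebCount_update_isSome (E' := c.edges) hv, pebCount_eta]
        exact hpc
      · rw [List.map_append]
        simp only [List.map_cons, List.map_nil, hembE]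
        rw [List.nodup_append]
        exact ⟨hnd, List.nodup_singleton _, by
          intro e hee e2 hee2 heq
          rw [List.mem_singleton.1 hee2] at heq
          rw [heq] at hee
          exact hnotin hee⟩
      · intro e hee
        rw [List.map_append] at hee
        rcases List.mem_append.1 hee with hee | hee
        · exact hmem e hee
        · simp only [List.map_cons, List.map_nil, hembE, List.mem_singleton] at hee
          rw [hee]
          exact hmemE
      · show (c.edges.erase (u, v)) = _
        rw [hedg, List.map_append]
        simp only [List.map_cons, List.map_nil, hembE]
        ext ed
        simp only [Finset.mem_erase, Finset.mem_sdiff, List.toFinset_append, Finset.mem_union,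
          List.mem_toFinset, List.toFinset_cons, List.toFinset_nil, insert_empty_eq,
          Finset.mem_insert, Finset.mem_singleton, List.mem_singleton]
        tauto
      · -- the arithmetic
        dsimp only
        have hdelta' : deltaT (cs ++ [(src G i j, i)]) (Function.update c.peb v (some Pebble.blue)) = 1 := by
          rw [deltaT_some _ _ _ (List.getLast?_concat (l := cs))]
          rw [show (Sum.inl ((src G i j, i).2) : Fin n ⊕ Fin n × Fin n) = v from hv_eq.symm]
          simp [Function.update_self]
        have hextra' : extra (cs ++ [(src G i j, i)]) (Function.update c.peb v (some Pebble.blue)) = 0 := by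
          unfold extra
          have hfil : (Finset.univ.filter fun w => ((Function.update c.peb v (some Pebble.blue)) w).isSome)
              = (Finset.univ.filter fun w => (c.peb w).isSome) := by
            rw [filter_update_some]
            refine Finset.insert_eq_self.2 ?_
            simp only [Finset.mem_filter, Finset.mem_univ, true_and]
            exact hv
          rw [hfil, hF]
          have hall : allowed (cs ++ [(src G i j, i)]) = {u, v} := by
            rw [allowed_some _ _ (List.getLast?_concat (l := cs)), ← hu_eq, ← hv_eq]
          rw [hall, Finset.sdiff_self, Finset.card_empty]
        rw [hdelta', hextra',
          show (cs ++ [(src G i j, i)]).map Prod.fst = cs.map Prod.fst ++ [src G i j] from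
            by simp,
          show (cs ++ [(src G i j, i)]).map Prod.snd = cs.map Prod.snd ++ [i] from
            by simp,
          List.length_append]
        simp only [List.length_cons, List.length_nil]
        cases hcs : cs.getLast? with
        | none =>
          have hnil := List.getLast?_eq_none_iff.1 hcs
          subst hnil
          have hex2 : extra [] c.peb = 2 := by
            unfold extra
            rw [allowed_none [] rfl, Finset.sdiff_empty, hF,
              Finset.card_insert_of_notMem (by simp [hne_uv]), Finset.card_singleton]
          rw [deltaT_none [] c.peb rfl, hex2] at har
          simp only [List.length_nil, List.map_nil, List.nil_append] at har ⊢
          show 3 * (0 + 1) + 0 ≤ k1 + 0 + 1 + (dups [src G i j] + 2 * dups [i])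
          simp only [dups] at har ⊢
          omega
        | some st =>
          have hS : (cs.map Prod.fst).getLast? = some st.1 := by
            rw [List.getLast?_map, hcs]
            rfl
          have hT : (cs.map (Prod.snd (α := Fin n × Fin n))).getLast? = some st.2 := by
            rw [List.getLast?_map, hcs]
            rfl
          rw [dups_concat_last hS, dups_concat_last hT]
          have hdelA : deltaT cs c.peb ≤ 1 := by
            rw [deltaT_some _ _ _ hcs]
            split <;> omega
          have hallA : allowed cs = {Sum.inr st.1, Sum.inl st.2} :=
            allowed_some _ _ hcs
          have hdel0 : st.2 ≠ i → deltaT cs c.peb = 0 := by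
            intro hlt
            rw [deltaT_some _ _ _ hcs]
            have hnm : (Sum.inl st.2 : Fin n ⊕ Fin n × Fin n) ∉ ({u, v} : Finset _) := by
              rw [hu_eq, hv_eq]
              simp only [Finset.mem_insert, Finset.mem_singleton]
              push_neg
              exact ⟨by simp, by simp [hlt]⟩
            rw [← hF] at hnm
            simp only [Finset.mem_filter, Finset.mem_univ, true_and] at hnm
            cases hpp : c.peb (Sum.inl st.2) with
            | none => simp
            | some p =>
              rw [hpp] at hnm
              simp at hnm
          have hextu : st.1 ≠ src G i j → 1 ≤ extra cs c.peb := by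
            intro hls
            unfold extra
            rw [hF, hallA]
            refine Finset.card_pos.2 ⟨u, Finset.mem_sdiff.2 ⟨by simp, ?_⟩⟩
            rw [hu_eq]
            simp only [Finset.mem_insert, Finset.mem_singleton]
            push_neg
            refine ⟨fun hc => hls (Sum.inr.inj hc).symm, by simp⟩
          have hextv : st.2 ≠ i → 1 ≤ extra cs c.peb := by
            intro hlt
            unfold extra
            rw [hF, hallA]
            refine Finset.card_pos.2 ⟨v, Finset.mem_sdiff.2 ⟨by simp, ?_⟩⟩
            rw [hv_eq]
            simp only [Finset.mem_insert, Finset.mem_singleton]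
            push_neg
            refine ⟨by simp, fun hc => hlt (Sum.inl.inj hc).symm⟩
          have hextuv : st.1 ≠ src G i j → st.2 ≠ i → 2 ≤ extra cs c.peb := by
            intro hls hlt
            unfold extra
            rw [hF, hallA]
            have hsub : ({u, v} : Finset _) ⊆ ({u, v} : Finset _) \ {Sum.inr st.1, Sum.inl st.2} := by
              intro w hw
              rw [Finset.mem_sdiff]
              refine ⟨hw, ?_⟩
              rcases Finset.mem_insert.1 hw with rfl | hw2
              · rw [hu_eq]
                simp only [Finset.mem_insert, Finset.mem_singleton]
                push_neg
                exact ⟨fun hc => hls (Sum.inr.inj hc).symm, by simp⟩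
              · rw [Finset.mem_singleton.1 hw2, hv_eq]
                simp only [Finset.mem_insert, Finset.mem_singleton]
                push_neg
                exact ⟨by simp, fun hc => hlt (Sum.inl.inj hc).symm⟩
            calc 2 = ({u, v} : Finset _).card := by
                  rw [Finset.card_insert_of_notMem (by simp [hne_uv]), Finset.card_singleton]
              _ ≤ _ := Finset.card_le_card hsub
          by_cases hls : st.1 = src G i j
          · by_cases hlt : st.2 = i
            · rw [if_pos hls, if_pos hlt]
              omega
            · have h1 := hdel0 hlt
              have h2 := hextv hlt
              rw [if_pos hls, if_neg hlt]
              omega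
          · by_cases hlt : st.2 = i
            · have h2 := hextu hls
              rw [if_neg hls, if_pos hlt]
              omega
            · have h1 := hdel0 hlt
              have h2 := hextuv hls hlt
              rw [if_neg hls, if_neg hlt]
              omega

end Lower
section Final

variable {n : ℕ} (G : SimpleGraph (Fin n)) [DecidableRel G.Adj]

lemma chain'_imp_mem {α : Type*} {R S : α → α → Prop} :
    ∀ {l : List α}, (∀ a ∈ l, ∀ b ∈ l, R a b → S a b) → l.Chain' R → l.Chain' S
  | [], _, _ => List.isChain_nil
  | [a], _, _ => List.isChain_singleton a
  | a :: b :: t, himp, h => by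
      obtain ⟨hab, h'⟩ := List.isChain_cons_cons.1 h
      refine List.isChain_cons_cons.2 ⟨himp a (by simp) b (by simp) hab, ?_⟩
      exact chain'_imp_mem (fun x hx y hy => himp x (by simp [hx]) y (by simp [hy])) h'

lemma card_gadgetEdges : (gadgetEdges G).card = n ^ 2 := by
  rw [gadgetEdges, Finset.card_image_of_injective _ ?_, Finset.card_univ, Fintype.card_prod,
    Fintype.card_fin, sq]
  intro p q hpq
  have h1 : p.1 = q.1 := Sum.inl.inj (congrArg Prod.snd hpq)
  have h3 : src G p.1 p.2 = src G q.1 q.2 := Sum.inr.inj (congrArg Prod.fst hpq)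
  rw [h1] at h3
  exact Prod.ext h1 (src_inj G h3)

lemma deltaT_zero_of_no_blue (cs : List ((Fin n × Fin n) × Fin n))
    (f : (Fin n ⊕ Fin n × Fin n) → Option Pebble) (hf : ∀ v, f v ≠ some Pebble.blue) :
    deltaT cs f = 0 := by
  cases hcs : cs.getLast? with
  | none => exact deltaT_none _ _ hcs
  | some st =>
    rw [deltaT_some _ _ _ hcs, if_neg (hf _)]

lemma backward_dir (hn : 1 ≤ n) (k : ℕ) (hk : k ∈ Achievable 2 (gadgetEdges G))
    (hkb : k ≤ n ^ 2 + n + 1) :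
    ∃ σ : Equiv.Perm (Fin n), ∀ (m : ℕ) (h : m + 1 < n),
      G.Adj (σ ⟨m, Nat.lt_of_succ_lt h⟩) (σ ⟨m + 1, h⟩) := by
  obtain ⟨c', hr, hemp, hnb⟩ := hk
  obtain ⟨hpc, cs, hnd, hmem, hedg, har⟩ := inv_of_reach G hr
  -- basic bookkeeping
  have hS_sub : (cs.map (embE (n := n))).toFinset ⊆ gadgetEdges G := by
    intro e hee
    exact hmem e (List.mem_toFinset.1 hee)
  have hS_sup : gadgetEdges G ⊆ (cs.map (embE (n := n))).toFinset := by
    rw [hemp] at hedg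
    exact Finset.sdiff_eq_empty_iff_subset.1 hedg.symm
  have hS_eq : (cs.map (embE (n := n))).toFinset = gadgetEdges G :=
    Finset.Subset.antisymm hS_sub hS_sup
  have hlen : cs.length = n ^ 2 := by
    have h1 := List.toFinset_card_of_nodup hnd
    rw [hS_eq, card_gadgetEdges] at h1
    have h2 := h1.symm
    rw [List.length_map] at h2
    exact h2
  have hcs_nd : cs.Nodup := hnd.of_map _
  have hdelta0 : deltaT cs c'.peb = 0 := deltaT_zero_of_no_blue cs c'.peb hnb
  rw [hdelta0] at har
  -- every element of cs is an edge of its own gadget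
  have hsrc_mem : ∀ x ∈ cs, ∃ j, x.1 = src G x.2 j := by
    intro x hx
    have : embE x ∈ gadgetEdges G := hmem _ (List.mem_map_of_mem hx)
    rcases (mem_gadgetEdges G).1 this with ⟨i', j', hij⟩
    obtain ⟨h1, h2⟩ := Prod.mk.injEq _ _ _ _ ▸ hij
    refine ⟨j', ?_⟩
    have hx2 : x.2 = i' := Sum.inl.inj h2
    rw [Sum.inr.inj h1, hx2]
  -- all targets appear
  have htgt_univ : (cs.map Prod.snd).toFinset = Finset.univ := by
    apply Finset.eq_univ_of_forall
    intro i
    have : ge G i i ∈ (cs.map (embE (n := n))).toFinset := hS_sup (ge_mem G i i)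
    rcases List.mem_map.1 (List.mem_toFinset.1 this) with ⟨x, hx, hxe⟩
    have hx2 : x.2 = i := by
      have := congrArg Prod.snd hxe
      exact Sum.inl.inj this
    rw [List.mem_toFinset]
    exact List.mem_map.2 ⟨x, hx, hx2⟩
  -- numerics
  set tgts := cs.map Prod.snd with htgts
  set srcs := cs.map Prod.fst with hsrcs
  have hlen_t : tgts.length = n ^ 2 := by rw [htgts, List.length_map, hlen]
  have hdups0 : dups cs = 0 := dups_eq_zero_of_nodup hcs_nd
  have hBB : dups srcs + dups tgts ≤ n ^ 2 - 1 + dups cs := by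
    rcases cs with _ | ⟨x, t⟩
    · exfalso
      have h0 : 0 < n ^ 2 := pow_pos (by omega) 2
      simp at hlen
      omega
    · have := dups_fst_snd x t
      have hlt : t.length = n ^ 2 - 1 := by
        simp only [List.length_cons] at hlen
        omega
      rw [hsrcs, htgts]
      omega
  have hcds_len : (cds tgts).length + dups tgts = n ^ 2 := by
    rw [length_cds, hlen_t]
  have hcds_fin : (cds tgts).toFinset = Finset.univ := by
    rw [toFinset_cds, htgts, htgt_univ]
  have hn_le : n ≤ (cds tgts).length := by
    have h1 := List.toFinset_card_le (cds tgts)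
    rw [hcds_fin, Finset.card_univ, Fintype.card_fin] at h1
    exact h1
  -- conclude equalities
  have hdupT : dups tgts = n ^ 2 - n := by omega
  have hcds_n : (cds tgts).length = n := by omega
  have hchain_cs : cs.Chain' (fun a b => a.1 = b.1 ∨ a.2 = b.2) := by
    apply chain_of_dups cs hcs_nd
    rw [← hsrcs, ← htgts]
    omega
  have hchain_t : tgts.Chain' (fun a b => a = b ∨ G.Adj a b) := by
    rw [htgts]; refine (List.isChain_map _).2 ?_
    refine chain'_imp_mem (fun a ha b hb hab => ?_) hchain_cs
    by_cases h2 : a.2 = b.2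
    · exact Or.inl h2
    · refine Or.inr ?_
      rcases hab with h1 | h1
      · obtain ⟨ja, hja⟩ := hsrc_mem a ha
        obtain ⟨jb, hjb⟩ := hsrc_mem b hb
        exact adj_of_src_eq G h2 (by rw [← hja, ← hjb]; exact h1)
      · exact absurd h1 h2
  have hchain_d : (cds tgts).Chain' G.Adj := chain'_cds G.Adj tgts hchain_t
  have hnd_d : (cds tgts).Nodup := by
    apply nodup_of_card_toFinset
    rw [hcds_fin, Finset.card_univ, Fintype.card_fin, hcds_n]
  -- build the permutation
  set d := cds tgts with hd
  have hinj : Function.Injective (fun m : Fin n => d.get (Fin.cast hcds_n.symm m)) := by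
    intro a b hab
    have := List.nodup_iff_injective_get.1 hnd_d hab
    exact Fin.cast_injective _ (by exact this)
  have hbij : Function.Bijective (fun m : Fin n => d.get (Fin.cast hcds_n.symm m)) :=
    (Fintype.bijective_iff_injective_and_card _).2 ⟨hinj, rfl⟩
  refine ⟨Equiv.ofBijective _ hbij, ?_⟩
  intro m hm
  have hget := List.isChain_iff_getElem.1 hchain_d m (by rw [hcds_n]; omega)
  simp only [Equiv.ofBijective_apply]
  convert hget using 2 <;> rfl

end Final

/-- `G` has a Hamiltonian path iff there is a pebbling strategy in the
`(2,1)`-I/O model with partial computations that eliminates all edges of the gadget graph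
`G'` (storing all results) with total cost at most `n² + n + 1`. -/
theorem stmt13 (n : ℕ) (hn : 1 ≤ n) (G : SimpleGraph (Fin n)) [DecidableRel G.Adj] :
    (∃ σ : Equiv.Perm (Fin n), ∀ (i : ℕ) (h : i + 1 < n),
        G.Adj (σ ⟨i, by omega⟩) (σ ⟨i + 1, h⟩)) ↔
      ∃ k ∈ Achievable 2 (gadgetEdges G), k ≤ n ^ 2 + n + 1 := by
  constructor
  · rintro ⟨σ, hσ⟩
    exact forward_dir G hn σ hσ
  · rintro ⟨k, hk, hkb⟩
    exact backward_dir G hn k hk hkb
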